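/- Let (X,d) be a metric space, n ≥ 3, and T : X → X a mapping contracting total pairwise distance on n points with constant α ∈ [0,1). If x₁,...,x_{n−1} are pairwise distinct periodic points of T, and k is a common multiple of their prime periods, then S(x₁,...,x_{n−1}) remains unchanged under T^k applied coordinatewise; moreover, if additionally xₙ is a periodic point distinct from x₁,...,x_{n−1} with T^k(xₙ) = xₙ, then S(x₁,...,xₙ) ≤ α^k·S(x₁,...,xₙ), forcing S(x₁,...,xₙ) = 0, a contradiction. Hence T has at most n−1 periodic points. -/

import Mathlib

noncomputable def totalS {X : Type*} [MetricSpace X] {n : ℕ} (x : Fin n → X) : ℝ :=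
  ∑ i : Fin n, ∑ j ∈ Finset.Ioi i, dist (x i) (x j)

theorem stmt_17 {X : Type*} [MetricSpace X] (n : ℕ) (hn : 3 ≤ n)
    (T : X → X) (α : ℝ) (hα0 : 0 ≤ α) (hα1 : α < 1)
    (hT : ∀ x : Fin n → X, Function.Injective x → totalS (T ∘ x) ≤ α * totalS x) :
    (∀ x : Fin (n - 1) → X, Function.Injective x →
      (∀ i, ∃ p : ℕ, 0 < p ∧ T^[p] (x i) = x i) →
      ∀ k : ℕ, (∀ i, T^[k] (x i) = x i) →
        totalS (fun i => T^[k] (x i)) = totalS x) ∧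
    (∀ x : Fin n → X, Function.Injective x →
      (∀ i, ∃ p : ℕ, 0 < p ∧ T^[p] (x i) = x i) →
      ∀ k : ℕ, 0 < k → (∀ i, T^[k] (x i) = x i) →
        totalS x ≤ α ^ k * totalS x ∧ totalS x = 0) ∧
    ¬∃ x : Fin n → X, Function.Injective x ∧
      ∀ i, ∃ p : ℕ, 0 < p ∧ T^[p] (x i) = x i := by
  have tS_nonneg : ∀ {m : ℕ} (x : Fin m → X), 0 ≤ totalS x := by
    intro m x
    apply Finset.sum_nonneg; intro i _
    apply Finset.sum_nonneg; intro j _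
    exact dist_nonneg
  have key : ∀ x : Fin n → X, Function.Injective x → ∀ k : ℕ, 0 < k →
      (∀ i, T^[k] (x i) = x i) → totalS x ≤ α ^ k * totalS x ∧ totalS x = 0 := by
    intro x hinj k hk hfix
    have hinjm : ∀ m : ℕ, Function.Injective (fun i => T^[m] (x i)) := by
      intro m i j h
      simp only at h
      have h2 : T^[k*m - m] (T^[m] (x i)) = T^[k*m - m] (T^[m] (x j)) := by rw [h]
      rw [← Function.iterate_add_apply, ← Function.iterate_add_apply] at h2
      have hm : k*m - m + m = k*m := Nat.sub_add_cancel (Nat.le_mul_of_pos_left m hk)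
      rw [hm, Function.iterate_mul] at h2
      have hfixm : ∀ i, (T^[k])^[m] (x i) = x i := fun i => Function.iterate_fixed (hfix i) m
      rw [hfixm i, hfixm j] at h2
      exact hinj h2
    have decay : ∀ m : ℕ, totalS (fun i => T^[m] (x i)) ≤ α ^ m * totalS x := by
      intro m
      induction m with
      | zero => simp
      | succ m ih =>
        have h1 : totalS (fun i => T^[m+1] (x i)) = totalS (T ∘ fun i => T^[m] (x i)) := by
          congr 1; funext i; simp [Function.iterate_succ_apply']
        rw [h1]
        calc totalS (T ∘ fun i => T^[m] (x i)) ≤ α * totalS (fun i => T^[m] (x i)) :=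
              hT _ (hinjm m)
          _ ≤ α * (α ^ m * totalS x) := mul_le_mul_of_nonneg_left ih hα0
          _ = α ^ (m+1) * totalS x := by ring
    have heq : (fun i => T^[k] (x i)) = x := funext hfix
    have h3 : totalS x ≤ α ^ k * totalS x := by
      have := decay k; rwa [heq] at this
    have hαk : α ^ k < 1 := pow_lt_one₀ hα0 hα1 hk.ne'
    have h0 := tS_nonneg x
    exact ⟨h3, by nlinarith⟩
  refine ⟨?_, fun x hinj _ => key x hinj, ?_⟩
  · intro x _ _ k hk
    simp only [hk]
  · rintro ⟨x, hinj, hper⟩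
    choose p hp hfixp using hper
    set k := ∏ i, p i with hkdef
    have hk : 0 < k := Finset.prod_pos (fun i _ => hp i)
    have hfix : ∀ i, T^[k] (x i) = x i := by
      intro i
      obtain ⟨c, hc⟩ := Finset.dvd_prod_of_mem p (Finset.mem_univ i)
      rw [hkdef, hc, Function.iterate_mul, Function.iterate_fixed (hfixp i)]
    have h0 := (key x hinj k hk hfix).2
    have i0 : Fin n := ⟨0, by omega⟩
    have i1 : Fin n := ⟨1, by omega⟩
    have hlt : (⟨0, by omega⟩ : Fin n) < (⟨1, by omega⟩ : Fin n) := by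
      simp [Fin.lt_def]
    have hne : (⟨0, by omega⟩ : Fin n) ≠ (⟨1, by omega⟩ : Fin n) := ne_of_lt hlt
    have hd : 0 < dist (x ⟨0, by omega⟩) (x ⟨1, by omega⟩) :=
      dist_pos.mpr (fun h => hne (hinj h))
    have hle1 : dist (x ⟨0, by omega⟩) (x ⟨1, by omega⟩) ≤
        ∑ j ∈ Finset.Ioi (⟨0, by omega⟩ : Fin n), dist (x ⟨0, by omega⟩) (x j) := by
      apply Finset.single_le_sum (f := fun j => dist (x ⟨0, by omega⟩) (x j))
        (fun j _ => dist_nonneg)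
      simpa [Finset.mem_Ioi] using hlt
    have hle2 : ∑ j ∈ Finset.Ioi (⟨0, by omega⟩ : Fin n), dist (x ⟨0, by omega⟩) (x j) ≤
        totalS x := by
      apply Finset.single_le_sum
        (f := fun i => ∑ j ∈ Finset.Ioi i, dist (x i) (x j))
        (fun i _ => Finset.sum_nonneg fun j _ => dist_nonneg) (Finset.mem_univ _)
    rw [h0] at hle2
    linarith
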